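/- Let E be a family of d-subsets of [n] and let p be a positive integer with p ≤ min{|e'\e| : e, e' ∈ E, e ≠ e'}. Then every (E,p,d+1)-selector is an E-separable code. -/
import Mathlib


/-- The `k` smallest elements of a finset of `Fin N`. -/
def smallestK {N : ℕ} (s : Finset (Fin N)) (k : ℕ) : Finset (Fin N) :=
  ((s.sort (· ≤ ·)).take k).toFinset

lemma smallestK_subset {N : ℕ} (s : Finset (Fin N)) (k : ℕ) :
    smallestK s k ⊆ s := by
  intro x hx
  simp only [smallestK, List.mem_toFinset] at hx
  have := List.take_subset k (s.sort (· ≤ ·)) hx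
  rwa [Finset.mem_sort] at this

/-- If `p ≤ min{|e'\e| : e ≠ e' ∈ E}`, then every `(E,p,d+1)`-selector is an
`E`-separable code.  Here `S_{e,e',p} = e ∪ {p smallest elements of e'\e}`, and the
selector property says that for distinct `e, e' ∈ E` the columns indexed by
`S_{e,e',p}` contain at least `d+1` distinct rows of the identity matrix. -/
theorem selector_is_separable (t n d p : ℕ) (hp : 0 < p)
    (M : Fin t → Fin n → Bool) (E : Finset (Finset (Fin n)))
    (hEd : ∀ e ∈ E, e.card = d)
    (hmin : ∀ e ∈ E, ∀ e' ∈ E, e ≠ e' → p ≤ (e' \ e).card)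
    (hsel : ∀ e ∈ E, ∀ e' ∈ E, e ≠ e' →
      ∃ J ⊆ e ∪ smallestK (e' \ e) p, d + 1 ≤ J.card ∧
        ∀ j ∈ J, ∃ r : Fin t, M r j = true ∧
          ∀ j' ∈ e ∪ smallestK (e' \ e) p, j' ≠ j → M r j' = false) :
    ∀ e ∈ E, ∀ e' ∈ E, e ≠ e' →
      (fun i : Fin t => ∃ j ∈ e, M i j = true) ≠
      (fun i : Fin t => ∃ j ∈ e', M i j = true) := by
  intro e he e' he' hne
  obtain ⟨J, hJsub, hJcard, hJ⟩ := hsel e he e' he' hne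
  -- J has an element outside e
  have hnotsub : ¬ J ⊆ e := by
    intro h
    have := Finset.card_le_card h
    rw [hEd e he] at this
    omega
  obtain ⟨j, hjJ, hje⟩ := Finset.not_subset.mp hnotsub
  have hjS : j ∈ e ∪ smallestK (e' \ e) p := hJsub hjJ
  have hjsk : j ∈ smallestK (e' \ e) p := by
    rcases Finset.mem_union.mp hjS with h | h
    · exact absurd h hje
    · exact h
  have hje' : j ∈ e' := (Finset.mem_sdiff.mp (smallestK_subset _ _ hjsk)).1
  obtain ⟨r, hr1, hr2⟩ := hJ j hjJ
  intro hfun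
  have : (∃ j ∈ e, M r j = true) ↔ (∃ j ∈ e', M r j = true) :=
    Iff.of_eq (congrFun hfun r)
  have h2 : ∃ j ∈ e', M r j = true := ⟨j, hje', hr1⟩
  obtain ⟨j'', hj''e, hj''⟩ := this.mpr h2
  have : M r j'' = false := by
    apply hr2 j'' (Finset.mem_union_left _ hj''e)
    rintro rfl; exact hje hj''e
  simp [this] at hj''
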